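/- For every admissible function N for Δ(E_6), there exists no function F : Δ(E_6) → ℝ^8 such that 2·⟨β, F(α)⟩ = Γ_N(β,α) + Γ_N(β,−α) for all α, β ∈ Δ(E_6). (This is the key nonexistence result behind Theorem 2.2 for the exceptional simple Lie algebra E_6; since all roots have the same length there is a single coupling constant, which cancels from the identity.) -/

import Mathlib

open scoped RealInnerProductSpace

/-- The standard basis vector `e_k` of `ℝ^8` (0-based indexing: `eVec8 k` is `e_{k+1}`). -/
noncomputable def eVec8 (k : Fin 8) : EuclideanSpace ℝ (Fin 8) :=
  EuclideanSpace.single k 1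

/-- The root system of type `E_6` in `ℝ^8`, consisting of `±(e_k − e_l)`, `±(e_k + e_l)`
for `1 ≤ k < l ≤ 5`, and of `±(1/2)(e_8 − e_7 − e_6 + Σ_{k=1}^{5} ε_k e_k)` with signs
`ε_k = ±1` whose product is `+1` (i.e. an even number of minus signs). -/
def DeltaE6 : Set (EuclideanSpace ℝ (Fin 8)) :=
  {v | (∃ k l : Fin 8, (k : ℕ) < (l : ℕ) ∧ (l : ℕ) ≤ 4 ∧ ∃ s : ℝ, (s = 1 ∨ s = -1) ∧
          (v = s • (eVec8 k - eVec8 l) ∨ v = s • (eVec8 k + eVec8 l))) ∨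
       (∃ s : ℝ, (s = 1 ∨ s = -1) ∧ ∃ ε : Fin 5 → ℝ, (∀ k, ε k = 1 ∨ ε k = -1) ∧
          (∏ k, ε k) = 1 ∧
          v = s • ((1/2 : ℝ) • (eVec8 7 - eVec8 6 - eVec8 5 +
                ∑ k : Fin 5, ε k • eVec8 (Fin.castLE (by norm_num) k))))}

section Aux

lemma myc0 : ∀ h : (5:ℕ) ≤ 8, Fin.castLE h (0 : Fin 5) = (0 : Fin 8) := fun _ => rfl
lemma myc1 : ∀ h : (5:ℕ) ≤ 8, Fin.castLE h (1 : Fin 5) = (1 : Fin 8) := fun _ => rfl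
lemma myc2 : ∀ h : (5:ℕ) ≤ 8, Fin.castLE h (2 : Fin 5) = (2 : Fin 8) := fun _ => rfl
lemma myc3 : ∀ h : (5:ℕ) ≤ 8, Fin.castLE h (3 : Fin 5) = (3 : Fin 8) := fun _ => rfl
lemma myc4 : ∀ h : (5:ℕ) ≤ 8, Fin.castLE h (4 : Fin 5) = (4 : Fin 8) := fun _ => rfl

lemma sum_eVec8 (k : Fin 8) : ∑ j, eVec8 k j = 1 := by
  simp [eVec8, EuclideanSpace.single_apply]

lemma sum_smul_apply (s : ℝ) (w : EuclideanSpace ℝ (Fin 8)) :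
    ∑ j, (s • w) j = s * ∑ j, w j := by
  simp only [PiLp.smul_apply, smul_eq_mul]
  rw [Finset.mul_sum]

lemma sum_add_apply (x y : EuclideanSpace ℝ (Fin 8)) :
    ∑ j, (x + y) j = (∑ j, x j) + ∑ j, y j := by
  simp only [PiLp.add_apply]
  rw [Finset.sum_add_distrib]

lemma sum_sub_apply (x y : EuclideanSpace ℝ (Fin 8)) :
    ∑ j, (x - y) j = (∑ j, x j) - ∑ j, y j := by
  simp only [PiLp.sub_apply]
  rw [Finset.sum_sub_distrib]

set_option maxHeartbeats 1000000 in
/-- every coordinate of a root is in {0, ±1, ±1/2} -/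
lemma coord_vals {v : EuclideanSpace ℝ (Fin 8)} (hv : v ∈ DeltaE6) (j : Fin 8) :
    v j = 0 ∨ v j = 1 ∨ v j = -1 ∨ v j = 1/2 ∨ v j = -(1/2) := by
  rcases hv with ⟨k, l, hkl, hl, s, hs, h | h⟩ | ⟨s, hs, ε, hε, hprod, h⟩
  · rw [h]
    simp only [PiLp.smul_apply, PiLp.sub_apply, smul_eq_mul, eVec8,
      EuclideanSpace.single_apply]
    split_ifs with h1 h2 h2 <;> rcases hs with rfl | rfl <;> norm_num
  · rw [h]
    simp only [PiLp.smul_apply, PiLp.add_apply, smul_eq_mul, eVec8,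
      EuclideanSpace.single_apply]
    split_ifs with h1 h2 h2
    · exfalso; rw [← h1] at hkl; rw [← h2] at hl
      omega
    all_goals rcases hs with rfl | rfl <;> norm_num
  · rw [h, Fin.sum_univ_five]
    fin_cases j <;>
      simp [eVec8, EuclideanSpace.single_apply, myc0, myc1, myc2, myc3, myc4]
    all_goals rcases hs with rfl | rfl
    all_goals first
      | (norm_num; done)
      | ((rcases hε 0 with hh | hh <;> norm_num [hh]); done)
      | ((rcases hε 1 with hh | hh <;> norm_num [hh]); done)
      | ((rcases hε 2 with hh | hh <;> norm_num [hh]); done)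
      | ((rcases hε 3 with hh | hh <;> norm_num [hh]); done)
      | ((rcases hε 4 with hh | hh <;> norm_num [hh]); done)

/-- the sixth coordinate (index 5) of a root is in {0, ±1/2} -/
lemma coord5_vals {v : EuclideanSpace ℝ (Fin 8)} (hv : v ∈ DeltaE6) :
    v 5 = 0 ∨ v 5 = 1/2 ∨ v 5 = -(1/2) := by
  have h58 : ((5 : Fin 8) : ℕ) = 5 := rfl
  rcases hv with ⟨k, l, hkl, hl, s, hs, h | h⟩ | ⟨s, hs, ε, hε, hprod, h⟩
  · left
    have hk : ¬((5 : Fin 8) = k) := by intro e; rw [← e] at hkl; omega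
    have hl5 : ¬((5 : Fin 8) = l) := by intro e; rw [← e] at hl; omega
    rw [h]
    simp [eVec8, EuclideanSpace.single_apply, hk, hl5]
  · left
    have hk : ¬((5 : Fin 8) = k) := by intro e; rw [← e] at hkl; omega
    have hl5 : ¬((5 : Fin 8) = l) := by intro e; rw [← e] at hl; omega
    rw [h]
    simp [eVec8, EuclideanSpace.single_apply, hk, hl5]
  · rw [h, Fin.sum_univ_five]
    rcases hs with rfl | rfl <;>
      simp [eVec8, EuclideanSpace.single_apply, myc0, myc1, myc2, myc3, myc4] <;>
      norm_num

/-- the coordinate sum of a root is never 4 -/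
lemma sum_ne_four {v : EuclideanSpace ℝ (Fin 8)} (hv : v ∈ DeltaE6) :
    ∑ j, v j ≠ 4 := by
  rcases hv with ⟨k, l, hkl, hl, s, hs, h | h⟩ | ⟨s, hs, ε, hε, hprod, h⟩
  · rw [h, sum_smul_apply, sum_sub_apply, sum_eVec8, sum_eVec8]
    rcases hs with rfl | rfl <;> norm_num
  · rw [h, sum_smul_apply, sum_add_apply, sum_eVec8, sum_eVec8]
    rcases hs with rfl | rfl <;> norm_num
  · have hb : ∀ k, -1 ≤ ε k ∧ ε k ≤ 1 := by
      intro k; rcases hε k with e | e <;> rw [e] <;> norm_num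
    rw [h, Fin.sum_univ_five]
    simp only [sum_smul_apply, sum_add_apply, sum_sub_apply, sum_eVec8, mul_one]
    intro heq
    rcases hs with rfl | rfl <;>
      [linarith [(hb 0).2, (hb 1).2, (hb 2).2, (hb 3).2, (hb 4).2];
       linarith [(hb 0).1, (hb 1).1, (hb 2).1, (hb 3).1, (hb 4).1]]

lemma zero_not_mem : (0 : EuclideanSpace ℝ (Fin 8)) ∉ DeltaE6 := by
  intro hv
  rcases hv with ⟨k, l, hkl, hl, s, hs, h | h⟩ | ⟨s, hs, ε, hε, hprod, h⟩
  · have hne : ¬(k = l) := by intro e; rw [e] at hkl; omega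
    have h' := congrArg (fun v : EuclideanSpace ℝ (Fin 8) => v k) h
    simp [eVec8, EuclideanSpace.single_apply, hne] at h'
    rcases hs with rfl | rfl <;> norm_num at h'
  · have hne : ¬(k = l) := by intro e; rw [e] at hkl; omega
    have h' := congrArg (fun v : EuclideanSpace ℝ (Fin 8) => v k) h
    simp [eVec8, EuclideanSpace.single_apply, hne] at h'
    rcases hs with rfl | rfl <;> norm_num at h'
  · rw [Fin.sum_univ_five] at h
    have h' := congrArg (fun v : EuclideanSpace ℝ (Fin 8) => v 7) h
    simp [eVec8, EuclideanSpace.single_apply, myc0, myc1, myc2, myc3, myc4] at h'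
    rcases hs with rfl | rfl <;> norm_num at h'

noncomputable def hwv (ε : Fin 5 → ℝ) : EuclideanSpace ℝ (Fin 8) :=
  (1/2 : ℝ) • (eVec8 7 - eVec8 6 - eVec8 5 +
                ∑ k : Fin 5, ε k • eVec8 (Fin.castLE (by norm_num) k))

lemma hwv_mem (ε : Fin 5 → ℝ) (hε : ∀ k, ε k = 1 ∨ ε k = -1) (hprod : ∏ k, ε k = 1)
    (s : ℝ) (hs : s = 1 ∨ s = -1) : s • hwv ε ∈ DeltaE6 :=
  Or.inr ⟨s, hs, ε, hε, hprod, rfl⟩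

noncomputable def av : EuclideanSpace ℝ (Fin 8) := (-1 : ℝ) • hwv ![1,-1,-1,-1,-1]
noncomputable def bv : EuclideanSpace ℝ (Fin 8) := hwv ![1,-1,1,1,-1]
noncomputable def z2v : EuclideanSpace ℝ (Fin 8) := hwv ![1,1,1,1,1]
noncomputable def z3v : EuclideanSpace ℝ (Fin 8) := (-1 : ℝ) • (eVec8 1 - eVec8 3)
noncomputable def z4v : EuclideanSpace ℝ (Fin 8) := (-1 : ℝ) • (eVec8 2 - eVec8 4)

lemma hav : av ∈ DeltaE6 :=
  hwv_mem _ (by intro k; fin_cases k <;> norm_num)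
    (by norm_num [Fin.prod_univ_five, Matrix.cons_val_two, Matrix.cons_val_three, Matrix.cons_val_four, Matrix.tail_cons]) _ (Or.inr rfl)

lemma hbv : bv ∈ DeltaE6 := by
  have := hwv_mem ![1,-1,1,1,-1] (by intro k; fin_cases k <;> norm_num)
    (by norm_num [Fin.prod_univ_five, Matrix.cons_val_two, Matrix.cons_val_three, Matrix.cons_val_four, Matrix.tail_cons]) 1 (Or.inl rfl)
  rwa [one_smul] at this

lemma hz2 : z2v ∈ DeltaE6 := by
  have := hwv_mem ![1,1,1,1,1] (by intro k; fin_cases k <;> norm_num)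
    (by norm_num [Fin.prod_univ_five, Matrix.cons_val_two, Matrix.cons_val_three, Matrix.cons_val_four, Matrix.tail_cons]) 1 (Or.inl rfl)
  rwa [one_smul] at this

lemma hz3 : z3v ∈ DeltaE6 :=
  Or.inl ⟨1, 3, by decide, by decide, -1, Or.inr rfl, Or.inl rfl⟩

lemma hz4 : z4v ∈ DeltaE6 :=
  Or.inl ⟨2, 4, by decide, by decide, -1, Or.inr rfl, Or.inl rfl⟩

lemma hid : bv + av = eVec8 2 + eVec8 3 := by
  ext j
  fin_cases j <;>
    simp [bv, av, hwv, eVec8, EuclideanSpace.single_apply, Fin.sum_univ_five,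
      myc0, myc1, myc2, myc3, myc4] <;> norm_num

lemma hsum_mem : bv + av ∈ DeltaE6 :=
  Or.inl ⟨2, 3, by decide, by decide, 1, Or.inl rfl,
    Or.inr (by rw [one_smul]; exact hid)⟩

lemma hrel : bv + bv + av + z4v = z2v + z3v := by
  ext j
  fin_cases j <;>
    simp [bv, av, z2v, z3v, z4v, hwv, eVec8, EuclideanSpace.single_apply,
      Fin.sum_univ_five, myc0, myc1, myc2, myc3, myc4] <;> norm_num

lemma sum_av : ∑ j, av j = 2 := by
  rw [av, hwv, Fin.sum_univ_five]
  simp only [sum_smul_apply, sum_add_apply, sum_sub_apply, sum_eVec8, mul_one]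
  norm_num [Matrix.cons_val_two, Matrix.cons_val_three, Matrix.cons_val_four, Matrix.tail_cons]

lemma sum_z2v : ∑ j, z2v j = 2 := by
  rw [z2v, hwv, Fin.sum_univ_five]
  simp only [sum_smul_apply, sum_add_apply, sum_sub_apply, sum_eVec8, mul_one]
  norm_num [Matrix.cons_val_two, Matrix.cons_val_three, Matrix.cons_val_four, Matrix.tail_cons]

lemma n_avav : av + av ∉ DeltaE6 := by
  intro hm
  exact sum_ne_four hm (by rw [sum_add_apply, sum_av]; norm_num)

lemma n_z2_add : z2v + av ∉ DeltaE6 := by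
  intro hm
  exact sum_ne_four hm (by rw [sum_add_apply, sum_z2v, sum_av]; norm_num)

lemma n_zero : av + -av ∉ DeltaE6 := by
  rw [add_neg_cancel]; exact zero_not_mem

lemma n_bv_sub : bv + -av ∉ DeltaE6 := by
  intro hm
  have h := coord5_vals hm
  have hc : (bv + -av) 5 = -1 := by
    simp [bv, av, hwv, eVec8, EuclideanSpace.single_apply, Fin.sum_univ_five,
      myc0, myc1, myc2, myc3, myc4]
    norm_num
  rw [hc] at h; norm_num at h

lemma n_z2_sub : z2v + -av ∉ DeltaE6 := by
  intro hm
  have h := coord5_vals hm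
  have hc : (z2v + -av) 5 = -1 := by
    simp [z2v, av, hwv, eVec8, EuclideanSpace.single_apply, Fin.sum_univ_five,
      myc0, myc1, myc2, myc3, myc4]
    norm_num
  rw [hc] at h; norm_num at h

lemma n_z3_add : z3v + av ∉ DeltaE6 := by
  intro hm
  have h := coord_vals hm 3
  have hc : (z3v + av) 3 = 3/2 := by
    simp [z3v, av, hwv, eVec8, EuclideanSpace.single_apply, Fin.sum_univ_five,
      myc0, myc1, myc2, myc3, myc4]
    norm_num
  rw [hc] at h; norm_num at h

lemma n_z3_sub : z3v + -av ∉ DeltaE6 := by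
  intro hm
  have h := coord_vals hm 1
  have hc : (z3v + -av) 1 = -(3/2) := by
    simp [z3v, av, hwv, eVec8, EuclideanSpace.single_apply, Fin.sum_univ_five,
      myc0, myc1, myc2, myc3, myc4]
    norm_num
  rw [hc] at h; norm_num at h

lemma n_z4_add : z4v + av ∉ DeltaE6 := by
  intro hm
  have h := coord_vals hm 4
  have hc : (z4v + av) 4 = 3/2 := by
    simp [z4v, av, hwv, eVec8, EuclideanSpace.single_apply, Fin.sum_univ_five,
      myc0, myc1, myc2, myc3, myc4]
    norm_num
  rw [hc] at h; norm_num at h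

lemma n_z4_sub : z4v + -av ∉ DeltaE6 := by
  intro hm
  have h := coord_vals hm 2
  have hc : (z4v + -av) 2 = -(3/2) := by
    simp [z4v, av, hwv, eVec8, EuclideanSpace.single_apply, Fin.sum_univ_five,
      myc0, myc1, myc2, myc3, myc4]
    norm_num
  rw [hc] at h; norm_num at h

end Aux

theorem stmt_7
    (N : EuclideanSpace ℝ (Fin 8) → EuclideanSpace ℝ (Fin 8) → ℝ)
    (hN : ∀ α ∈ DeltaE6, ∀ β ∈ DeltaE6, (N β α ≠ 0 ↔ β + α ∈ DeltaE6))
    (Γ : EuclideanSpace ℝ (Fin 8) → EuclideanSpace ℝ (Fin 8) → ℝ)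
    (hΓ : ∀ β α : EuclideanSpace ℝ (Fin 8),
      (β + α ∈ DeltaE6 → Γ β α = N β α) ∧ (β + α ∉ DeltaE6 → Γ β α = 0)) :
    ¬ ∃ F : EuclideanSpace ℝ (Fin 8) → EuclideanSpace ℝ (Fin 8),
        ∀ α ∈ DeltaE6, ∀ β ∈ DeltaE6, 2 * ⟪β, F α⟫ = Γ β α + Γ β (-α) := by
  rintro ⟨F, hF⟩
  have hNne : N bv av ≠ 0 := (hN av hav bv hbv).mpr hsum_mem
  have e_b := hF av hav bv hbv
  rw [(hΓ bv av).1 hsum_mem, (hΓ bv (-av)).2 n_bv_sub] at e_b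
  have e_a := hF av hav av hav
  rw [(hΓ av av).2 n_avav, (hΓ av (-av)).2 n_zero] at e_a
  have e_2 := hF av hav z2v hz2
  rw [(hΓ z2v av).2 n_z2_add, (hΓ z2v (-av)).2 n_z2_sub] at e_2
  have e_3 := hF av hav z3v hz3
  rw [(hΓ z3v av).2 n_z3_add, (hΓ z3v (-av)).2 n_z3_sub] at e_3
  have e_4 := hF av hav z4v hz4
  rw [(hΓ z4v av).2 n_z4_add, (hΓ z4v (-av)).2 n_z4_sub] at e_4
  have lin : ⟪bv + bv + av + z4v, F av⟫ = ⟪z2v + z3v, F av⟫ := by rw [hrel]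
  simp only [inner_add_left] at lin
  exact hNne (by linarith [e_b, e_a, e_2, e_3, e_4, lin])
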